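/- Assume V* ∈ H satisfies b + (γΣ₁ − Σ)V* = 0. Let V : ℝ → H be differentiable with V(0) = 0 and V′(t) = (γΣ₁ − Σ)V(t) + b for all t ≥ 0. Then for every T > 0, the Polyak–Ruppert average V̄_T := (1/T) ∫₀^T V(t) dt satisfies ‖Σ^{1/2}(V̄_T − V*)‖² ≤ ‖V*‖² / (2(1 − γ)T). -/

import Mathlib

open scoped InnerProductSpace
open MeasureTheory intervalIntegral

/-- Prop. 6, unregularized case: assume `V*` satisfies
`b + (γΣ₁ - Σ)V* = 0` and `V : ℝ → H` is differentiable with `V(0) = 0` and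
`V'(t) = (γΣ₁ - Σ)V(t) + b` for all `t ≥ 0`.  Then for every `T > 0`, the Polyak–Ruppert
average `V̄_T = (1/T)∫₀ᵀ V(t) dt` satisfies
`‖Σ^{1/2}(V̄_T - V*)‖² ≤ ‖V*‖² / (2(1-γ)T)`. -/
theorem td_ode_polyak_ruppert_rate
    {H : Type*} [NormedAddCommGroup H] [InnerProductSpace ℝ H] [CompleteSpace H]
    (Sig S T1 Sig1 : H →L[ℝ] H)
    (hSigSA : IsSelfAdjoint Sig) (hSigPos : ∀ f : H, 0 ≤ ⟪f, Sig f⟫_ℝ)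
    (hSsa : IsSelfAdjoint S) (hSpos : ∀ f : H, 0 ≤ ⟪f, S f⟫_ℝ) (hSsq : S * S = Sig)
    (hT1 : ‖T1‖ ≤ 1) (hSig1 : Sig1 = S * T1 * S)
    (γ : ℝ) (hγ0 : 0 ≤ γ) (hγ1 : γ < 1) (b : H)
    (Vstar : H) (hVstar : b + (γ • Sig1 - Sig) Vstar = 0)
    (V : ℝ → H) (hVdiff : Differentiable ℝ V) (hV0 : V 0 = 0)
    (hODE : ∀ t : ℝ, 0 ≤ t → HasDerivAt V ((γ • Sig1 - Sig) (V t) + b) t)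
    (T : ℝ) (hT : 0 < T) :
    ‖S ((T⁻¹ • ∫ t in (0:ℝ)..T, V t) - Vstar)‖ ^ 2 ≤ ‖Vstar‖ ^ 2 / (2 * (1 - γ) * T) := by
  set A : H →L[ℝ] H := γ • Sig1 - Sig with hA
  set W : ℝ → H := fun t => V t - Vstar with hWdef
  have hγ : (0:ℝ) < 1 - γ := by linarith
  have hSsym : ∀ x y : H, ⟪S x, y⟫_ℝ = ⟪x, S y⟫_ℝ :=
    fun x y => (ContinuousLinearMap.isSelfAdjoint_iff_isSymmetric.mp hSsa) x y
  -- key dissipativity inequality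
  have hkey : ∀ w : H, ⟪w, A w⟫_ℝ ≤ -((1 - γ) * ‖S w‖ ^ 2) := by
    intro w
    have h1 : ⟪w, Sig w⟫_ℝ = ‖S w‖ ^ 2 := by
      have e : Sig w = S (S w) := by rw [← hSsq]; rfl
      rw [e, ← hSsym, real_inner_self_eq_norm_sq]
    have h2 : ⟪w, Sig1 w⟫_ℝ ≤ ‖S w‖ ^ 2 := by
      have e : Sig1 w = S (T1 (S w)) := by rw [hSig1]; rfl
      rw [e, ← hSsym]
      calc ⟪S w, T1 (S w)⟫_ℝ ≤ ‖S w‖ * ‖T1 (S w)‖ := real_inner_le_norm _ _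
        _ ≤ ‖S w‖ * (1 * ‖S w‖) := by
            have := T1.le_of_opNorm_le hT1 (S w)
            have h' : ‖T1 (S w)‖ ≤ 1 * ‖S w‖ := this
            exact mul_le_mul_of_nonneg_left h' (norm_nonneg _)
        _ = ‖S w‖ ^ 2 := by ring
    have e : ⟪w, A w⟫_ℝ = γ * ⟪w, Sig1 w⟫_ℝ - ⟪w, Sig w⟫_ℝ := by
      simp [hA, ContinuousLinearMap.sub_apply, ContinuousLinearMap.smul_apply,
        inner_sub_right, real_inner_smul_right]
    rw [e, h1]
    nlinarith [mul_le_mul_of_nonneg_left h2 hγ0]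
  -- ODE for W
  have hAVstar : A Vstar = -b := eq_neg_of_add_eq_zero_right hVstar
  have hWderiv : ∀ t : ℝ, 0 ≤ t → HasDerivAt W (A (W t)) t := by
    intro t ht
    have h := (hODE t ht).sub_const Vstar
    have e : A (W t) = A (V t) + b := by
      simp [hWdef, map_sub, hAVstar]
    rw [e]; exact h
  have hVcont : Continuous V := hVdiff.continuous
  have hWcont : Continuous W := hVcont.sub continuous_const
  have hWdiff : Differentiable ℝ W := fun t => (hVdiff t).sub_const Vstar
  have hqcont : Continuous fun t => ‖S (W t)‖ := (S.continuous.comp hWcont).norm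
  have hq2cont : Continuous fun t => ‖S (W t)‖ ^ 2 := hqcont.pow 2
  -- Lyapunov function
  set φ : ℝ → ℝ := fun t => ⟪W t, W t⟫_ℝ + 2 * (1 - γ) * ∫ s in (0:ℝ)..t, ‖S (W s)‖ ^ 2
    with hφdef
  have hFTC : ∀ t : ℝ, HasDerivAt (fun u => ∫ s in (0:ℝ)..u, ‖S (W s)‖ ^ 2)
      (‖S (W t)‖ ^ 2) t := by
    intro t
    exact intervalIntegral.integral_hasDerivAt_right
      (hq2cont.intervalIntegrable _ _)
      (hq2cont.stronglyMeasurableAtFilter _ _) hq2cont.continuousAt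
  have hφderiv : ∀ t : ℝ, 0 ≤ t → HasDerivAt φ
      (2 * ⟪W t, A (W t)⟫_ℝ + 2 * (1 - γ) * ‖S (W t)‖ ^ 2) t := by
    intro t ht
    have h1 := (hWderiv t ht).inner ℝ (hWderiv t ht)
    have h2 := (hFTC t).const_mul (2 * (1 - γ))
    have := h1.add h2
    exact this.congr_deriv (by
      rw [real_inner_comm (A (W t)) (W t)]
      ring)
  have hφdiff : Differentiable ℝ φ := by
    have : Differentiable ℝ fun t => ⟪W t, W t⟫_ℝ := hWdiff.inner ℝ hWdiff
    have hint : Differentiable ℝ fun u => ∫ s in (0:ℝ)..u, ‖S (W s)‖ ^ 2 :=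
      fun t => (hFTC t).differentiableAt
    exact this.add (hint.const_mul _)
  have hanti : AntitoneOn φ (Set.Icc 0 T) := by
    apply antitoneOn_of_deriv_nonpos (convex_Icc 0 T) hφdiff.continuous.continuousOn
      hφdiff.differentiableOn
    intro x hx
    rw [interior_Icc] at hx
    rw [(hφderiv x hx.1.le).deriv]
    have := hkey (W x)
    nlinarith
  have hφT : φ T ≤ φ 0 := hanti (Set.left_mem_Icc.mpr hT.le)
    (Set.right_mem_Icc.mpr hT.le) hT.le
  have hφ0 : φ 0 = ‖Vstar‖ ^ 2 := by
    simp [hφdef, hWdef, hV0, real_inner_self_eq_norm_sq]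
  have hIntBound : ∫ s in (0:ℝ)..T, ‖S (W s)‖ ^ 2 ≤ ‖Vstar‖ ^ 2 / (2 * (1 - γ)) := by
    have hnn : 0 ≤ ⟪W T, W T⟫_ℝ := real_inner_self_nonneg
    have h2γ : (0:ℝ) < 2 * (1 - γ) := by linarith
    have hT2 := hφT
    rw [hφ0] at hT2
    simp only [hφdef] at hT2
    rw [le_div_iff₀ h2γ]
    nlinarith [hT2]
  -- rewrite the average
  have hWint : IntervalIntegrable W volume 0 T := hWcont.intervalIntegrable _ _
  have hmean : (T⁻¹ • ∫ t in (0:ℝ)..T, V t) - Vstar = T⁻¹ • ∫ t in (0:ℝ)..T, W t := by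
    rw [hWdef]
    rw [intervalIntegral.integral_sub (hVcont.intervalIntegrable _ _)
      (intervalIntegrable_const), intervalIntegral.integral_const, smul_sub, smul_smul]
    have : T⁻¹ * (T - 0) = 1 := by field_simp; simp
    rw [this, one_smul]
  have hcomm : (∫ t in (0:ℝ)..T, S (W t)) = S (∫ t in (0:ℝ)..T, W t) :=
    S.intervalIntegral_comp_comm hWint
  have hnorm1 : ‖S (∫ t in (0:ℝ)..T, W t)‖ ≤ ∫ t in (0:ℝ)..T, ‖S (W t)‖ := by
    rw [← hcomm]
    exact intervalIntegral.norm_integral_le_integral_norm hT.le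
  -- Cauchy-Schwarz
  set I : ℝ := ∫ t in (0:ℝ)..T, ‖S (W t)‖ with hI
  set J : ℝ := ∫ t in (0:ℝ)..T, ‖S (W t)‖ ^ 2 with hJ
  have hqint : IntervalIntegrable (fun t => ‖S (W t)‖) volume 0 T :=
    hqcont.intervalIntegrable _ _
  have hq2int : IntervalIntegrable (fun t => ‖S (W t)‖ ^ 2) volume 0 T :=
    hq2cont.intervalIntegrable _ _
  have hCS : I ^ 2 ≤ T * J := by
    have h0 : 0 ≤ ∫ t in (0:ℝ)..T, (‖S (W t)‖ - I / T) ^ 2 :=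
      intervalIntegral.integral_nonneg hT.le (fun t _ => sq_nonneg _)
    have hexp : (∫ t in (0:ℝ)..T, (‖S (W t)‖ - I / T) ^ 2)
        = J - (2 * (I / T)) * I + (I / T) ^ 2 * (T - 0) := by
      have e1 : ∀ t : ℝ, (‖S (W t)‖ - I / T) ^ 2
          = (‖S (W t)‖ ^ 2 - 2 * (I / T) * ‖S (W t)‖) + (I / T) ^ 2 := fun t => by ring
      simp_rw [e1]
      rw [intervalIntegral.integral_add (hq2int.sub (hqint.const_mul _))
        intervalIntegrable_const,
        intervalIntegral.integral_sub hq2int (hqint.const_mul _),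
        intervalIntegral.integral_const_mul, intervalIntegral.integral_const,
        smul_eq_mul]
      ring
    rw [hexp] at h0
    have hT' : T ≠ 0 := ne_of_gt hT
    have h1 : 0 ≤ T * (J - 2 * (I / T) * I + (I / T) ^ 2 * (T - 0)) := mul_nonneg hT.le h0
    have e : T * (J - 2 * (I / T) * I + (I / T) ^ 2 * (T - 0)) = T * J - I ^ 2 := by
      field_simp; ring
    rw [e] at h1
    linarith
  have hInn : 0 ≤ I := intervalIntegral.integral_nonneg hT.le (fun t _ => norm_nonneg _)
  -- put everything together
  have hTi : ‖(T:ℝ)⁻¹‖ = T⁻¹ := by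
    rw [Real.norm_eq_abs, abs_of_pos (inv_pos.mpr hT)]
  rw [hmean, _root_.map_smul, norm_smul, hTi]
  have hb1 : (T⁻¹ * ‖S (∫ t in (0:ℝ)..T, W t)‖) ^ 2 ≤ (T⁻¹) ^ 2 * I ^ 2 := by
    have h1 : ‖S (∫ t in (0:ℝ)..T, W t)‖ ^ 2 ≤ I ^ 2 :=
      pow_le_pow_left₀ (norm_nonneg _) hnorm1 2
    calc (T⁻¹ * ‖S (∫ t in (0:ℝ)..T, W t)‖) ^ 2
        = (T⁻¹) ^ 2 * ‖S (∫ t in (0:ℝ)..T, W t)‖ ^ 2 := by ring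
      _ ≤ (T⁻¹) ^ 2 * I ^ 2 := mul_le_mul_of_nonneg_left h1 (sq_nonneg _)
  calc (T⁻¹ * ‖S (∫ t in (0:ℝ)..T, W t)‖) ^ 2 ≤ (T⁻¹) ^ 2 * I ^ 2 := hb1
    _ ≤ (T⁻¹) ^ 2 * (T * J) := by
        exact mul_le_mul_of_nonneg_left hCS (sq_nonneg _)
    _ = J / T := by field_simp
    _ ≤ (‖Vstar‖ ^ 2 / (2 * (1 - γ))) / T := by
        gcongr
    _ = ‖Vstar‖ ^ 2 / (2 * (1 - γ) * T) := by
        rw [div_div]
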